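/- Let C > 0 and let e : [0,∞) → [0,∞) be a continuous function satisfying e(t) + ∫_s^t e(τ) dτ ≤ C e(s) for all 0 ≤ s ≤ t. Then there exist constants M, ω > 0 (depending only on C) such that e(t) ≤ M e^{-ωt} e(0) for all t ≥ 0. -/

import Mathlib

open MeasureTheory intervalIntegral

/-- Abstract barrier argument: an observability-type energy inequality implies
exponential decay. -/
theorem exp_decay_of_energy_observability
    (C : ℝ) (hC : 0 < C) (e : ℝ → ℝ)
    (hcont : ContinuousOn e (Set.Ici 0))
    (hnonneg : ∀ t, 0 ≤ t → 0 ≤ e t)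
    (hineq : ∀ s t : ℝ, 0 ≤ s → s ≤ t → e t + ∫ τ in s..t, e τ ≤ C * e s) :
    ∃ M ω : ℝ, 0 < M ∧ 0 < ω ∧ ∀ t, 0 ≤ t → e t ≤ M * Real.exp (-ω * t) * e 0 := by
  -- Replace C by C' = max C 1 ≥ 1
  set C' : ℝ := max C 1 with hC'def
  have hC1 : (1:ℝ) ≤ C' := le_max_right _ _
  have hC'pos : 0 < C' := lt_of_lt_of_le one_pos hC1
  have hCle : C ≤ C' := le_max_left _ _
  have hineq' : ∀ s t : ℝ, 0 ≤ s → s ≤ t → e t + ∫ τ in s..t, e τ ≤ C' * e s := by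
    intro s t hs hst
    have h1 := hineq s t hs hst
    have h2 : C * e s ≤ C' * e s := mul_le_mul_of_nonneg_right hCle (hnonneg s hs)
    linarith
  -- integrability on intervals
  have hint : ∀ s t : ℝ, 0 ≤ s → s ≤ t → IntervalIntegrable e volume s t := by
    intro s t hs hst
    apply ContinuousOn.intervalIntegrable
    apply hcont.mono
    intro x hx
    rw [Set.uIcc_of_le hst] at hx
    exact le_trans hs hx.1
  -- integrals of e are nonneg
  have hintnn : ∀ s t : ℝ, 0 ≤ s → s ≤ t → 0 ≤ ∫ τ in s..t, e τ := by
    intro s t hs hst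
    apply intervalIntegral.integral_nonneg hst
    intro x hx
    exact hnonneg x (le_trans hs hx.1)
  -- crude bound e t ≤ C' e s
  have hcrude : ∀ s t : ℝ, 0 ≤ s → s ≤ t → e t ≤ C' * e s := by
    intro s t hs hst
    have := hineq' s t hs hst
    have := hintnn s t hs hst
    linarith
  -- refined bound
  have hA : ∀ s t : ℝ, 0 ≤ s → s ≤ t → e t * (1 + (t - s) / C') ≤ C' * e s := by
    intro s t hs hst
    have hlow : ∫ τ in s..t, (e t / C') ≤ ∫ τ in s..t, e τ := by
      apply intervalIntegral.integral_mono_on hst intervalIntegrable_const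
        (hint s t hs hst)
      intro x hx
      have hx0 : 0 ≤ x := le_trans hs hx.1
      have := hcrude x t hx0 hx.2
      rw [div_le_iff₀ hC'pos]
      linarith [mul_comm (e x) C']
    rw [intervalIntegral.integral_const, smul_eq_mul] at hlow
    have := hineq' s t hs hst
    have heq : e t * (1 + (t - s) / C') = e t + (t - s) * (e t / C') := by
      field_simp
    linarith [heq ▸ le_refl (e t * (1 + (t - s) / C'))]
  -- barrier time
  set T : ℝ := 2 * C' * C' - C' with hTdef
  have hT : 0 < T := by nlinarith
  have hB : ∀ s : ℝ, 0 ≤ s → e (s + T) ≤ e s / 2 := by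
    intro s hs
    have h := hA s (s + T) hs (by linarith)
    have hfact : 1 + (s + T - s) / C' = 2 * C' := by
      field_simp [hTdef]
      linear_combination hTdef
    rw [hfact] at h
    have hes := hnonneg (s + T) (by linarith)
    nlinarith
  -- iterate
  have hC0 : ∀ n : ℕ, e ((n : ℝ) * T) ≤ (1/2 : ℝ) ^ n * e 0 := by
    intro n
    induction n with
    | zero => simp
    | succ n ih =>
      have hn : (0:ℝ) ≤ (n : ℝ) * T := by positivity
      have := hB ((n : ℝ) * T) hn
      have hcast : ((n + 1 : ℕ) : ℝ) * T = (n : ℝ) * T + T := by push_cast; ring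
      rw [hcast]
      calc e ((n : ℝ) * T + T) ≤ e ((n : ℝ) * T) / 2 := this
        _ ≤ ((1/2 : ℝ) ^ n * e 0) / 2 := by linarith
        _ = (1/2 : ℝ) ^ (n + 1) * e 0 := by ring
  refine ⟨2 * C', Real.log 2 / T, by positivity,
    div_pos (Real.log_pos one_lt_two) hT, ?_⟩
  intro t ht
  set n : ℕ := ⌊t / T⌋₊ with hn
  have hnle : (n : ℝ) * T ≤ t := by
    have := Nat.floor_le (div_nonneg ht hT.le)
    calc (n : ℝ) * T ≤ (t / T) * T := by
          exact mul_le_mul_of_nonneg_right this hT.le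
      _ = t := by field_simp
  have hnlt : t < ((n : ℝ) + 1) * T := by
    have := Nat.lt_floor_add_one (t / T)
    calc t = (t / T) * T := by field_simp
      _ < ((n : ℝ) + 1) * T := by
          exact mul_lt_mul_of_pos_right this hT
  have hnn : (0:ℝ) ≤ (n : ℝ) * T := by positivity
  have h1 : e t ≤ C' * e ((n : ℝ) * T) := hcrude _ t hnn hnle
  have h2 : e ((n : ℝ) * T) ≤ (1/2 : ℝ) ^ n * e 0 := hC0 n
  have he0 : 0 ≤ e 0 := hnonneg 0 le_rfl
  -- compare (1/2)^n with exponential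
  have hexp : (1/2 : ℝ) ^ n ≤ 2 * Real.exp (-(Real.log 2 / T) * t) := by
    have key : Real.exp (-(Real.log 2) * ((n : ℝ) + 1)) ≤
        Real.exp (-(Real.log 2 / T) * t) := by
      apply Real.exp_le_exp.mpr
      rw [neg_mul, neg_mul, neg_le_neg_iff]
      rw [div_mul_eq_mul_div, div_le_iff₀ hT]
      have hlog : 0 < Real.log 2 := Real.log_pos one_lt_two
      nlinarith
    have heq : Real.exp (-(Real.log 2) * ((n : ℝ) + 1)) = (1/2 : ℝ) ^ (n + 1) := by
      rw [mul_comm]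
      push_cast
      rw [show (((n : ℝ) + 1)) * -Real.log 2 = ((n + 1 : ℕ) : ℝ) * (-Real.log 2) by
        push_cast; ring]
      rw [Real.exp_nat_mul, Real.exp_neg, Real.exp_log two_pos]
      norm_num
    rw [heq] at key
    calc (1/2 : ℝ) ^ n = 2 * (1/2 : ℝ) ^ (n + 1) := by ring
      _ ≤ 2 * Real.exp (-(Real.log 2 / T) * t) := by linarith
  have hpow : (0:ℝ) ≤ (1/2 : ℝ) ^ n := by positivity
  calc e t ≤ C' * ((1/2 : ℝ) ^ n * e 0) := by
        refine h1.trans ?_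
        exact mul_le_mul_of_nonneg_left h2 hC'pos.le
    _ ≤ C' * (2 * Real.exp (-(Real.log 2 / T) * t) * e 0) := by
        apply mul_le_mul_of_nonneg_left _ hC'pos.le
        exact mul_le_mul_of_nonneg_right hexp he0
    _ = 2 * C' * Real.exp (-(Real.log 2 / T) * t) * e 0 := by ring
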